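/- There exist endomorphisms φ₁, φ₂ of ℝ⁸, skew-adjoint with respect to the nondegenerate symmetric bilinear form of signature (4,4) given by ⟨u,v⟩ = −u₁v₁ − u₂v₂ − u₃v₃ − u₄v₄ + u₅v₅ + u₆v₆ + u₇v₇ + u₈v₈, such that φ₁∘φ₁ = 0, φ₂∘φ₂ = 0, φ₁∘φ₂ + φ₂∘φ₁ = 0, and φ₁∘φ₂ ≠ 0. -/
import Mathlib

noncomputable section

/-- The nondegenerate symmetric bilinear form of signature (4,4) on ℝ⁸:
`⟨u,v⟩ = -u₁v₁ - u₂v₂ - u₃v₃ - u₄v₄ + u₅v₅ + u₆v₆ + u₇v₇ + u₈v₈`. -/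
def form44 (u v : Fin 8 → ℝ) : ℝ :=
  ∑ i : Fin 8, (if (i : ℕ) < 4 then (-1 : ℝ) else 1) * u i * v i

def psi1 : (Fin 8 → ℝ) →ₗ[ℝ] (Fin 8 → ℝ) where
  toFun x i :=
    if i = 0 then x 1 + x 5 else if i = 1 then -x 0 + x 4 else if i = 2 then x 3 + x 7
    else if i = 3 then -x 2 + x 6 else if i = 4 then x 1 + x 5 else if i = 5 then x 0 - x 4
    else if i = 6 then x 3 + x 7 else x 2 - x 6
  map_add' x y := by funext i; fin_cases i <;> simp <;> ring
  map_smul' c x := by funext i; fin_cases i <;> simp <;> ring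

def psi2 : (Fin 8 → ℝ) →ₗ[ℝ] (Fin 8 → ℝ) where
  toFun x i :=
    if i = 0 then x 3 - x 7 else if i = 1 then x 2 - x 6 else if i = 2 then -x 1 + x 5
    else if i = 3 then -x 0 + x 4 else if i = 4 then x 3 - x 7 else if i = 5 then x 2 - x 6
    else if i = 6 then -x 1 + x 5 else -x 0 + x 4
  map_add' x y := by funext i; fin_cases i <;> simp <;> ring
  map_smul' c x := by funext i; fin_cases i <;> simp <;> ring

/-- There exist endomorphisms `φ₁, φ₂` of `ℝ⁸`, skew-adjoint with respect
to the signature-(4,4) form, with `φ₁² = φ₂² = 0`, `φ₁φ₂ + φ₂φ₁ = 0` and `φ₁φ₂ ≠ 0`. -/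
theorem exists_skew_adjoint_pair :
    ∃ φ₁ φ₂ : (Fin 8 → ℝ) →ₗ[ℝ] (Fin 8 → ℝ),
      (∀ x y : Fin 8 → ℝ, form44 (φ₁ x) y = - form44 x (φ₁ y)) ∧
      (∀ x y : Fin 8 → ℝ, form44 (φ₂ x) y = - form44 x (φ₂ y)) ∧
      φ₁ ∘ₗ φ₁ = 0 ∧ φ₂ ∘ₗ φ₂ = 0 ∧
      φ₁ ∘ₗ φ₂ + φ₂ ∘ₗ φ₁ = 0 ∧ φ₁ ∘ₗ φ₂ ≠ 0 := by
  refine ⟨psi1, psi2, ?_, ?_, ?_, ?_, ?_, ?_⟩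
  · intro x y
    simp [form44, Fin.sum_univ_eight, psi1, show ((3:Fin 8):ℕ)=3 from rfl, show ((4:Fin 8):ℕ)=4 from rfl, show ((5:Fin 8):ℕ)=5 from rfl, show ((6:Fin 8):ℕ)=6 from rfl, show ((7:Fin 8):ℕ)=7 from rfl]
    ring
  · intro x y
    simp [form44, Fin.sum_univ_eight, psi2, show ((3:Fin 8):ℕ)=3 from rfl, show ((4:Fin 8):ℕ)=4 from rfl, show ((5:Fin 8):ℕ)=5 from rfl, show ((6:Fin 8):ℕ)=6 from rfl, show ((7:Fin 8):ℕ)=7 from rfl]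
    ring
  · apply LinearMap.ext; intro x; funext i
    fin_cases i <;> simp [psi1] <;> ring
  · apply LinearMap.ext; intro x; funext i
    fin_cases i <;> simp [psi2]
  · apply LinearMap.ext; intro x; funext i
    fin_cases i <;> simp [psi1, psi2] <;> ring
  · intro h
    have h3 := congrFun (LinearMap.congr_fun h (Pi.single 2 1)) 0
    simp [psi1, psi2, Pi.single_apply] at h3
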